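/- Let G ⊆ GL₂(Ẑ) be an open subgroup with conductor m_G, and for each prime ℓ let β_ℓ be the exponent of ℓ in m_G, i.e. m_G = ∏_ℓ ℓ^{β_ℓ}. Define β'_ℓ to be the least integer β ≥ 0 such that for every integer γ with β ≤ γ ≤ max{β, α_ℓ}, one has ker(GL₂(ℤ/ℓ^{γ+1}ℤ) → GL₂(ℤ/ℓ^γℤ)) × {1} ⊆ (π_{ℓ^∞,ℓ^{γ+1}} × id)(G), where GL₂(Ẑ) is identified with GL₂(ℤ_ℓ) × GL₂(ℤ_(ℓ)), π_{ℓ^∞,ℓ^{γ+1}} : GL₂(ℤ_ℓ) → GL₂(ℤ/ℓ^{γ+1}ℤ) is the reduction map and id is the identity on GL₂(ℤ_(ℓ)). Then β_ℓ = β'_ℓ for every prime ℓ. -/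

import Mathlib

open scoped MatrixGroups

/-- `α_ℓ`: 2 if ℓ = 2, else 1. -/
def alphaExp (ℓ : ℕ) : ℕ := if ℓ = 2 then 2 else 1

/-- The map `GL₂(R) → GL₂(S)` induced by a ring hom `R →+* S`. -/
abbrev glMap {R S : Type*} [CommRing R] [CommRing S] (f : R →+* S) :
    GL (Fin 2) R →* GL (Fin 2) S := Matrix.GeneralLinearGroup.map f

/-- `SL₂(R)` viewed as a subgroup of `GL₂(R)`. -/
def SL2subgroup (R : Type*) [CommRing R] : Subgroup (GL (Fin 2) R) :=
  (Matrix.SpecialLinearGroup.toGL (n := Fin 2) (R := R)).range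

/-- `Ẑ`, the profinite completion of `ℤ`, realized as the inverse limit of `ℤ/nℤ`. -/
def ZHat : Subring (∀ n : ℕ+, ZMod n) where
  carrier := {x | ∀ (d n : ℕ+) (h : (d : ℕ) ∣ (n : ℕ)),
    ZMod.castHom h (ZMod (d : ℕ)) (x n) = x d}
  mul_mem' {x y} hx hy := fun d n h => by
    simp only [Pi.mul_apply, map_mul, hx d n h, hy d n h]
  one_mem' := fun d n h => map_one (ZMod.castHom h (ZMod (d : ℕ)))
  add_mem' {x y} hx hy := fun d n h => by
    simp only [Pi.add_apply, map_add, hx d n h, hy d n h]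
  zero_mem' := fun d n h => map_zero (ZMod.castHom h (ZMod (d : ℕ)))
  neg_mem' {x} hx := fun d n h => by
    simp only [Pi.neg_apply, map_neg, hx d n h]

/-- Reduction `Ẑ → ℤ/mℤ`. -/
def ZHat.proj (m : ℕ+) : ZHat →+* ZMod (m : ℕ) :=
  (Pi.evalRingHom (fun n : ℕ+ => ZMod (n : ℕ)) m).comp (Subring.subtype ZHat)

/-- Reduction `GL₂(Ẑ) → GL₂(ℤ/mℤ)`. -/
abbrev GLred (m : ℕ+) : GL (Fin 2) ZHat →* GL (Fin 2) (ZMod (m : ℕ)) :=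
  glMap (ZHat.proj m)

/-- The canonical projection `Ẑ → ℤ_ℓ`. -/
def ZHat.toPadicInt (ℓ : ℕ) [Fact ℓ.Prime] : ZHat →+* ℤ_[ℓ] :=
  PadicInt.lift (f := fun n => ZHat.proj ⟨ℓ ^ n, pow_pos (Nat.Prime.pos Fact.out) n⟩)
    (fun k1 k2 hk => RingHom.ext fun x =>
      x.2 ⟨ℓ ^ k1, pow_pos (Nat.Prime.pos Fact.out) k1⟩
        ⟨ℓ ^ k2, pow_pos (Nat.Prime.pos Fact.out) k2⟩ (pow_dvd_pow ℓ hk))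

/-- `ℤ_(ℓ) = ∏_{p ≠ ℓ} ℤ_p`, realized as the inverse limit of `ℤ/nℤ` over `n` coprime to `ℓ`. -/
def ZHatAway (ℓ : ℕ) : Subring (∀ n : {n : ℕ+ // ¬ (ℓ ∣ (n : ℕ))}, ZMod ((n : ℕ+) : ℕ)) where
  carrier := {x | ∀ (d n : {n : ℕ+ // ¬ (ℓ ∣ (n : ℕ))}) (h : ((d : ℕ+) : ℕ) ∣ ((n : ℕ+) : ℕ)),
    ZMod.castHom h (ZMod ((d : ℕ+) : ℕ)) (x n) = x d}
  mul_mem' {x y} hx hy := fun d n h => by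
    simp only [Pi.mul_apply, map_mul, hx d n h, hy d n h]
  one_mem' := fun d n h => map_one (ZMod.castHom h (ZMod ((d : ℕ+) : ℕ)))
  add_mem' {x y} hx hy := fun d n h => by
    simp only [Pi.add_apply, map_add, hx d n h, hy d n h]
  zero_mem' := fun d n h => map_zero (ZMod.castHom h (ZMod ((d : ℕ+) : ℕ)))
  neg_mem' {x} hx := fun d n h => by
    simp only [Pi.neg_apply, map_neg, hx d n h]

/-- The canonical projection `Ẑ → ℤ_(ℓ)`. -/
def ZHat.away (ℓ : ℕ) : ZHat →+* ZHatAway ℓ where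
  toFun x := ⟨fun n => x.1 n.1, fun d n h => x.2 d.1 n.1 h⟩
  map_one' := rfl
  map_mul' _ _ := rfl
  map_zero' := rfl
  map_add' _ _ := rfl

/-- The radical of a natural number. -/
def radical (n : ℕ) : ℕ := ∏ p ∈ n.primeFactors, p

/-- The modified radical `rad'`. -/
def radical' (n : ℕ) : ℕ := if 4 ∣ n then 2 * radical n else radical n

lemma radical_pos (n : ℕ) : 0 < radical n :=
  Finset.prod_pos fun p hp => (Nat.prime_of_mem_primeFactors hp).pos

lemma radical'_pos (n : ℕ) : 0 < radical' n := by
  unfold radical'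
  split
  · exact Nat.mul_pos two_pos (radical_pos n)
  · exact radical_pos n

lemma radical_dvd (n : ℕ) : radical n ∣ n := Nat.prod_primeFactors_dvd n

lemma radical'_dvd (n : ℕ) : radical' n ∣ n := by
  unfold radical'
  split
  case isTrue h4 =>
    rcases Nat.eq_zero_or_pos n with rfl | hn
    · exact Dvd.intro 0 rfl
    · have h2 : 2 ∈ n.primeFactors :=
        Nat.mem_primeFactors.mpr ⟨Nat.prime_two, dvd_trans ⟨2, rfl⟩ h4, hn.ne'⟩
      set P : ℕ := ∏ p ∈ n.primeFactors.erase 2, p with hP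
      have hrad : radical n = 2 * P := by
        rw [radical, ← Finset.mul_prod_erase _ _ h2]
      have hPdvd : P ∣ n := by
        refine dvd_trans ?_ (radical_dvd n)
        exact Finset.prod_dvd_prod_of_subset _ _ _ (Finset.erase_subset _ _)
      have hPodd : ¬ (2 ∣ P) := by
        intro hdvd
        obtain ⟨p, hp, hpdvd⟩ :=
          (Nat.Prime.prime Nat.prime_two).exists_mem_finset_dvd hdvd
        have hpp := Nat.prime_of_mem_primeFactors (Finset.mem_of_mem_erase hp)
        have : p = 2 := ((Nat.prime_dvd_prime_iff_eq Nat.prime_two hpp).mp hpdvd).symm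
        exact (Finset.ne_of_mem_erase hp) this
      have hcop : Nat.Coprime 4 P := by
        have : Nat.Coprime 2 P := (Nat.Prime.coprime_iff_not_dvd Nat.prime_two).mpr hPodd
        have h4eq : (4 : ℕ) = 2 ^ 2 := by norm_num
        rw [h4eq]
        exact Nat.Coprime.pow_left 2 this
      have : 4 * P ∣ n := hcop.mul_dvd_of_dvd_of_dvd h4 hPdvd
      calc 2 * radical n = 4 * P := by rw [hrad]; ring
        _ ∣ n := this
  case isFalse => exact radical_dvd n

namespace Stmt3Aux

variable (ℓ : ℕ) [Fact ℓ.Prime]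

/-- `ℓ^c` as a `ℕ+`, matching the form used in `ZHat.toPadicInt`. -/
def Pp (c : ℕ) : ℕ+ := ⟨ℓ ^ c, pow_pos (Nat.Prime.pos Fact.out) c⟩

lemma proj_comp_toPadicInt (c : ℕ) :
    (PadicInt.toZModPow (p := ℓ) c).comp (ZHat.toPadicInt ℓ) = ZHat.proj (Pp ℓ c) :=
  PadicInt.lift_spec _ c

variable {ℓ}

lemma GL_ext {R : Type*} [CommRing R] {u v : GL (Fin 2) R}
    (h : ∀ i j, u.val i j = v.val i j) : u = v :=
  Units.ext (Matrix.ext h)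

lemma glMap_entry {R S : Type*} [CommRing R] [CommRing S] (f : R →+* S)
    (u : GL (Fin 2) R) (i j : Fin 2) : (glMap f u).val i j = f (u.val i j) := rfl

lemma matrix_one_entry {R S : Type*} [CommRing R] [CommRing S] (f : R →+* S) (i j : Fin 2) :
    f ((1 : Matrix (Fin 2) (Fin 2) R) i j) = (1 : Matrix (Fin 2) (Fin 2) S) i j := by
  by_cases h : i = j <;> simp [Matrix.one_apply, h]

lemma GL_one_entry {R : Type*} [CommRing R] (i j : Fin 2) :
    (1 : GL (Fin 2) R).val i j = (1 : Matrix (Fin 2) (Fin 2) R) i j := rfl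

/-- ring homs out of `ZMod a × ZMod b` with `a, b` coprime are unique. -/
lemma zmodProd_ringHom_ext {a b : ℕ} (h : a.Coprime b) {R : Type*} [Ring R]
    (f g : ZMod a × ZMod b →+* R) : f = g := by
  have e := ZMod.chineseRemainder h
  have h1 : f.comp (e.toRingHom) = g.comp (e.toRingHom) := Subsingleton.elim _ _
  ext x
  have : x = e.toRingHom (e.symm x) := (e.apply_symm_apply x).symm
  rw [this, ← RingHom.comp_apply, ← RingHom.comp_apply, h1]

lemma zmod_pair_inj {a b d : ℕ} (cop : a.Coprime b) (hd : d = a * b)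
    (hda : a ∣ d) (hdb : b ∣ d) {x y : ZMod d}
    (h1 : ZMod.castHom hda (ZMod a) x = ZMod.castHom hda (ZMod a) y)
    (h2 : ZMod.castHom hdb (ZMod b) x = ZMod.castHom hdb (ZMod b) y) : x = y := by
  subst hd
  have e := ZMod.chineseRemainder cop
  have hfst : (RingHom.fst (ZMod a) (ZMod b)).comp e.toRingHom
      = ZMod.castHom hda (ZMod a) := Subsingleton.elim _ _
  have hsnd : (RingHom.snd (ZMod a) (ZMod b)).comp e.toRingHom
      = ZMod.castHom hdb (ZMod b) := Subsingleton.elim _ _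
  apply e.injective
  apply Prod.ext
  · have := congrArg (fun f : ZMod (a*b) →+* ZMod a => f x = f y) hfst
    simpa using this.mpr h1
  · have := congrArg (fun f : ZMod (a*b) →+* ZMod b => f x = f y) hsnd
    simpa using this.mpr h2

end Stmt3Aux
namespace Stmt3Aux

variable {ℓ : ℕ} [Fact ℓ.Prime]

lemma GL_eq_one_of_crt {a b d : ℕ} (cop : a.Coprime b) (hd : d = a * b)
    (hda : a ∣ d) (hdb : b ∣ d) {u : GL (Fin 2) (ZMod d)}
    (h1 : glMap (ZMod.castHom hda (ZMod a)) u = 1)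
    (h2 : glMap (ZMod.castHom hdb (ZMod b)) u = 1) : u = 1 := by
  apply GL_ext
  intro i j
  apply zmod_pair_inj cop hd hda hdb
  · have e1 : (glMap (ZMod.castHom hda (ZMod a)) u).val i j = (1 : GL (Fin 2) (ZMod a)).val i j := by
      rw [h1]
    rw [glMap_entry] at e1
    rw [e1, GL_one_entry]
    exact (matrix_one_entry (ZMod.castHom hda (ZMod a)) i j).symm
  · have e2 : (glMap (ZMod.castHom hdb (ZMod b)) u).val i j = (1 : GL (Fin 2) (ZMod b)).val i j := by
      rw [h2]
    rw [glMap_entry] at e2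
    rw [e2, GL_one_entry]
    exact (matrix_one_entry (ZMod.castHom hdb (ZMod b)) i j).symm

lemma GLred_compat {d n : ℕ+} (h : (d : ℕ) ∣ (n : ℕ)) (g : GL (Fin 2) ZHat) :
    glMap (ZMod.castHom h (ZMod (d : ℕ))) (GLred n g) = GLred d g := by
  apply GL_ext
  intro i j
  rw [glMap_entry, glMap_entry, glMap_entry]
  exact (g.val i j).2 d n h

lemma GLred_pow_compat (ℓ : ℕ) [Fact ℓ.Prime] {c c' : ℕ} (h : c' ≤ c) (g : GL (Fin 2) ZHat) :
    glMap (ZMod.castHom (pow_dvd_pow ℓ h) (ZMod (ℓ ^ c'))) (GLred (Pp ℓ c) g)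
      = GLred (Pp ℓ c') g :=
  GLred_compat (d := Pp ℓ c') (n := Pp ℓ c) (pow_dvd_pow ℓ h) g

/-- if the "away" part of `g` is `1` then `g` reduces to `1` mod any `n` coprime to `ℓ`. -/
lemma GLred_of_away (n : ℕ+) (hn : ¬ ℓ ∣ (n : ℕ)) {g : GL (Fin 2) ZHat}
    (hg : glMap (ZHat.away ℓ) g = 1) : GLred n g = 1 := by
  apply GL_ext
  intro i j
  have e1 : (glMap (ZHat.away ℓ) g).val i j = (1 : GL (Fin 2) (ZHatAway ℓ)).val i j := by rw [hg]
  rw [glMap_entry] at e1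
  have : ZHat.proj n (g.val i j) = ((ZHat.away ℓ (g.val i j)) : ∀ n : {n : ℕ+ // ¬ (ℓ ∣ (n : ℕ))},
      ZMod ((n : ℕ+) : ℕ)) ⟨n, hn⟩ := rfl
  rw [glMap_entry, GL_one_entry, this, e1, GL_one_entry]
  by_cases h : i = j <;> simp [Matrix.one_apply, h] <;> rfl

lemma zmod_isUnit_of_cast {c : ℕ} (hc : 1 ≤ c) {x : ZMod (ℓ ^ c)}
    (hx : IsUnit (ZMod.castHom (dvd_pow_self ℓ (by omega : c ≠ 0)) (ZMod ℓ) x)) : IsUnit x := by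
  haveI : NeZero (ℓ ^ c) := NeZero.mk (pow_ne_zero _ (Nat.Prime.pos (Fact.out : ℓ.Prime)).ne')
  have hval : ((x.val : ℕ) : ZMod (ℓ ^ c)) = x := ZMod.natCast_zmod_val x
  rw [← hval, ZMod.isUnit_iff_coprime]
  have : ((x.val : ℕ) : ZMod ℓ) = ZMod.castHom (dvd_pow_self ℓ (by omega : c ≠ 0)) (ZMod ℓ) x := by
    rw [ZMod.castHom_apply, ZMod.natCast_val]
  rw [← this] at hx
  have h1 : x.val.Coprime ℓ := (ZMod.isUnit_iff_coprime _ _).mp hx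
  exact Nat.Coprime.pow_right _ h1

lemma padic_isUnit_of_cast {c : ℕ} (hc : 1 ≤ c) {z : ℤ_[ℓ]}
    (hz : IsUnit (PadicInt.toZModPow c z)) : IsUnit z := by
  by_contra h
  have hmem : z ∈ IsLocalRing.maximalIdeal ℤ_[ℓ] := h
  rw [PadicInt.maximalIdeal_eq_span_p, Ideal.mem_span_singleton] at hmem
  obtain ⟨w, hw⟩ := hmem
  rw [hw, map_mul, map_natCast] at hz
  have hunit : IsUnit ((ℓ : ZMod (ℓ ^ c))) := isUnit_of_mul_isUnit_left hz
  rw [show ((ℓ : ZMod (ℓ ^ c))) = ((ℓ : ℕ) : ZMod (ℓ ^ c)) by norm_cast,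
    ZMod.isUnit_iff_coprime] at hunit
  have : ℓ ∣ Nat.gcd ℓ (ℓ ^ c) := Nat.dvd_gcd dvd_rfl (dvd_pow_self ℓ (by omega))
  rw [hunit] at this
  exact (Nat.Prime.one_lt (Fact.out : ℓ.Prime)).ne' (Nat.dvd_one.mp this)

/-- Lift an element of `GL₂(ZMod (ℓ^c))` along `toZModPow`. -/
lemma exists_gl_lift {c : ℕ} (hc : 1 ≤ c) (k : GL (Fin 2) (ZMod (ℓ ^ c))) :
    ∃ X : GL (Fin 2) ℤ_[ℓ], glMap (PadicInt.toZModPow c) X = k := by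
  haveI : NeZero (ℓ ^ c) := NeZero.mk (pow_ne_zero _ (Nat.Prime.pos (Fact.out : ℓ.Prime)).ne')
  set M : Matrix (Fin 2) (Fin 2) ℤ_[ℓ] := fun i j => (((k.val i j).val : ℕ) : ℤ_[ℓ]) with hM
  have hmap : ∀ i j, PadicInt.toZModPow c (M i j) = k.val i j := by
    intro i j
    rw [hM]
    simp only [map_natCast]
    exact ZMod.natCast_zmod_val _
  have hdet : IsUnit M.det := by
    apply padic_isUnit_of_cast hc
    have : PadicInt.toZModPow c M.det = (M.map (PadicInt.toZModPow c)).det :=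
      RingHom.map_det _ _
    rw [this]
    have : M.map (PadicInt.toZModPow c) = k.val := by
      ext i j
      rw [Matrix.map_apply]
      exact hmap i j
    rw [this]
    exact (Matrix.isUnit_iff_isUnit_det _).mp k.isUnit
  have hu : IsUnit M := (Matrix.isUnit_iff_isUnit_det _).mpr hdet
  obtain ⟨u, hu⟩ := hu
  refine ⟨u, GL_ext fun i j => ?_⟩
  rw [glMap_entry, hu]
  exact hmap i j

end Stmt3Aux
namespace Stmt3Aux

variable (ℓ : ℕ) [Fact ℓ.Prime]

lemma lpos : 0 < ℓ := Nat.Prime.pos Fact.out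

noncomputable section

/-- the component of the "mix" of `x : ℤ_ℓ` and `y : ℤ_(ℓ)` at level `n`. -/
def mixC (x : ℤ_[ℓ]) (y : ZHatAway ℓ) (n : ℕ+) : ZMod (n : ℕ) :=
  ZMod.castHom (dvd_of_eq (Nat.ordProj_mul_ordCompl_eq_self (n : ℕ) ℓ).symm) (ZMod (n : ℕ))
    ((ZMod.chineseRemainder
        ((Nat.coprime_ordCompl (Fact.out : ℓ.Prime) n.pos.ne').pow_left _)).symm.toRingHom
      (PadicInt.toZModPow ((n : ℕ).factorization ℓ) x,
       y.1 ⟨⟨(n : ℕ) / ℓ ^ ((n : ℕ).factorization ℓ), Nat.ordCompl_pos ℓ n.pos.ne'⟩,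
            Nat.not_dvd_ordCompl (Fact.out : ℓ.Prime) n.pos.ne'⟩))

lemma mixC_cast_pow (x : ℤ_[ℓ]) (y : ZHatAway ℓ) (n : ℕ+) (c : ℕ) (h : ℓ ^ c ∣ (n : ℕ)) :
    ZMod.castHom h (ZMod (ℓ ^ c)) (mixC ℓ x y n) = PadicInt.toZModPow c x := by
  have hn0 : (n : ℕ) ≠ 0 := n.pos.ne'
  have hce : c ≤ (n : ℕ).factorization ℓ :=
    (Nat.Prime.pow_dvd_iff_le_factorization (Fact.out : ℓ.Prime) hn0).mp h
  have cop : (ℓ ^ ((n : ℕ).factorization ℓ)).Coprime ((n : ℕ) / ℓ ^ ((n : ℕ).factorization ℓ)) :=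
    (Nat.coprime_ordCompl (Fact.out : ℓ.Prime) hn0).pow_left _
  have key := zmodProd_ringHom_ext cop
    ((ZMod.castHom h (ZMod (ℓ ^ c))).comp
      ((ZMod.castHom (dvd_of_eq (Nat.ordProj_mul_ordCompl_eq_self (n : ℕ) ℓ).symm)
          (ZMod (n : ℕ))).comp
        (ZMod.chineseRemainder cop).symm.toRingHom))
    ((ZMod.castHom (pow_dvd_pow ℓ hce) (ZMod (ℓ ^ c))).comp
      (RingHom.fst (ZMod (ℓ ^ ((n : ℕ).factorization ℓ)))
        (ZMod ((n : ℕ) / ℓ ^ ((n : ℕ).factorization ℓ)))))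
  refine Eq.trans (DFunLike.congr_fun key
      (PadicInt.toZModPow ((n : ℕ).factorization ℓ) x,
       y.1 ⟨⟨(n : ℕ) / ℓ ^ ((n : ℕ).factorization ℓ), Nat.ordCompl_pos ℓ hn0⟩,
            Nat.not_dvd_ordCompl (Fact.out : ℓ.Prime) hn0⟩)) ?_
  show ZMod.castHom (pow_dvd_pow ℓ hce) (ZMod (ℓ ^ c))
      (PadicInt.toZModPow ((n : ℕ).factorization ℓ) x) = PadicInt.toZModPow c x
  rw [ZMod.castHom_apply, PadicInt.cast_toZModPow c _ hce]

lemma mixC_cast_away (x : ℤ_[ℓ]) (y : ZHatAway ℓ) (n : ℕ+)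
    (d : {m : ℕ+ // ¬ (ℓ ∣ ((m : ℕ+) : ℕ))}) (h : ((d : ℕ+) : ℕ) ∣ (n : ℕ)) :
    ZMod.castHom h (ZMod ((d : ℕ+) : ℕ)) (mixC ℓ x y n) = y.1 d := by
  have hn0 : (n : ℕ) ≠ 0 := n.pos.ne'
  have cop : (ℓ ^ ((n : ℕ).factorization ℓ)).Coprime ((n : ℕ) / ℓ ^ ((n : ℕ).factorization ℓ)) :=
    (Nat.coprime_ordCompl (Fact.out : ℓ.Prime) hn0).pow_left _
  have hcopd : ((d : ℕ+) : ℕ).Coprime (ℓ ^ ((n : ℕ).factorization ℓ)) :=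
    Nat.Coprime.pow_right _
      (((Nat.Prime.coprime_iff_not_dvd (Fact.out : ℓ.Prime)).mpr d.2).symm)
  have hdd : ((d : ℕ+) : ℕ) ∣ (n : ℕ) / ℓ ^ ((n : ℕ).factorization ℓ) := by
    apply hcopd.dvd_of_dvd_mul_left
    rwa [Nat.ordProj_mul_ordCompl_eq_self]
  have key := zmodProd_ringHom_ext cop
    ((ZMod.castHom h (ZMod ((d : ℕ+) : ℕ))).comp
      ((ZMod.castHom (dvd_of_eq (Nat.ordProj_mul_ordCompl_eq_self (n : ℕ) ℓ).symm)
          (ZMod (n : ℕ))).comp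
        (ZMod.chineseRemainder cop).symm.toRingHom))
    ((ZMod.castHom hdd (ZMod ((d : ℕ+) : ℕ))).comp
      (RingHom.snd (ZMod (ℓ ^ ((n : ℕ).factorization ℓ)))
        (ZMod ((n : ℕ) / ℓ ^ ((n : ℕ).factorization ℓ)))))
  refine Eq.trans (DFunLike.congr_fun key
      (PadicInt.toZModPow ((n : ℕ).factorization ℓ) x,
       y.1 ⟨⟨(n : ℕ) / ℓ ^ ((n : ℕ).factorization ℓ), Nat.ordCompl_pos ℓ hn0⟩,
            Nat.not_dvd_ordCompl (Fact.out : ℓ.Prime) hn0⟩)) ?_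
  exact y.2 d ⟨⟨(n : ℕ) / ℓ ^ ((n : ℕ).factorization ℓ), Nat.ordCompl_pos ℓ hn0⟩,
      Nat.not_dvd_ordCompl (Fact.out : ℓ.Prime) hn0⟩ hdd

lemma mixC_mem (x : ℤ_[ℓ]) (y : ZHatAway ℓ) : (fun n => mixC ℓ x y n) ∈ ZHat := by
  intro d n h
  have hd0 : (d : ℕ) ≠ 0 := d.pos.ne'
  set e := (d : ℕ).factorization ℓ with he
  have cop : (ℓ ^ e).Coprime ((d : ℕ) / ℓ ^ e) :=
    (Nat.coprime_ordCompl (Fact.out : ℓ.Prime) hd0).pow_left _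
  have heq : (d : ℕ) = ℓ ^ e * ((d : ℕ) / ℓ ^ e) :=
    (Nat.ordProj_mul_ordCompl_eq_self (d : ℕ) ℓ).symm
  have hda : ℓ ^ e ∣ (d : ℕ) := Nat.ordProj_dvd _ _
  have hdb : (d : ℕ) / ℓ ^ e ∣ (d : ℕ) := Nat.ordCompl_dvd _ _
  show ZMod.castHom h (ZMod (d : ℕ)) (mixC ℓ x y n) = mixC ℓ x y d
  apply zmod_pair_inj cop heq hda hdb
  · rw [← RingHom.comp_apply, ZMod.castHom_comp hda h]
    rw [mixC_cast_pow ℓ x y n e (dvd_trans hda h), mixC_cast_pow ℓ x y d e hda]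
  · rw [← RingHom.comp_apply, ZMod.castHom_comp hdb h]
    have h1 := mixC_cast_away ℓ x y n ⟨⟨(d : ℕ) / ℓ ^ e, Nat.ordCompl_pos ℓ hd0⟩,
        Nat.not_dvd_ordCompl (Fact.out : ℓ.Prime) hd0⟩ (dvd_trans hdb h)
    have h2 := mixC_cast_away ℓ x y d ⟨⟨(d : ℕ) / ℓ ^ e, Nat.ordCompl_pos ℓ hd0⟩,
        Nat.not_dvd_ordCompl (Fact.out : ℓ.Prime) hd0⟩ hdb
    exact h1.trans h2.symm

end

end Stmt3Aux
namespace Stmt3Aux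

variable (ℓ : ℕ) [Fact ℓ.Prime]

noncomputable section

lemma mixC_one (n : ℕ+) : mixC ℓ 1 1 n = 1 := by
  unfold mixC
  rw [show ((1 : ZHatAway ℓ)).1 ⟨⟨(n : ℕ) / ℓ ^ ((n : ℕ).factorization ℓ),
      Nat.ordCompl_pos ℓ n.pos.ne'⟩, Nat.not_dvd_ordCompl (Fact.out : ℓ.Prime) n.pos.ne'⟩
      = 1 from rfl, map_one]
  erw [map_one, map_one]

lemma mixC_mul (x x' : ℤ_[ℓ]) (y y' : ZHatAway ℓ) (n : ℕ+) :
    mixC ℓ (x * x') (y * y') n = mixC ℓ x y n * mixC ℓ x' y' n := by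
  unfold mixC
  rw [← map_mul, ← map_mul]
  congr 2
  exact Prod.ext (map_mul _ _ _) rfl

lemma mixC_add (x x' : ℤ_[ℓ]) (y y' : ZHatAway ℓ) (n : ℕ+) :
    mixC ℓ (x + x') (y + y') n = mixC ℓ x y n + mixC ℓ x' y' n := by
  unfold mixC
  rw [← map_add, ← map_add]
  congr 2
  exact Prod.ext (map_add _ _ _) rfl

lemma mixC_zero (n : ℕ+) : mixC ℓ 0 0 n = 0 := by
  unfold mixC
  rw [show ((0 : ZHatAway ℓ)).1 ⟨⟨(n : ℕ) / ℓ ^ ((n : ℕ).factorization ℓ),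
      Nat.ordCompl_pos ℓ n.pos.ne'⟩, Nat.not_dvd_ordCompl (Fact.out : ℓ.Prime) n.pos.ne'⟩
      = 0 from rfl, map_zero]
  erw [map_zero, map_zero]

/-- The mixing map `ℤ_ℓ × ℤ_(ℓ) → Ẑ`. -/
def mixHom : ℤ_[ℓ] × ZHatAway ℓ →+* ZHat where
  toFun p := ⟨fun n => mixC ℓ p.1 p.2 n, mixC_mem ℓ p.1 p.2⟩
  map_one' := Subtype.ext (funext fun n => mixC_one ℓ n)
  map_mul' p q := Subtype.ext (funext fun n => mixC_mul ℓ p.1 q.1 p.2 q.2 n)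
  map_zero' := Subtype.ext (funext fun n => mixC_zero ℓ n)
  map_add' p q := Subtype.ext (funext fun n => mixC_add ℓ p.1 q.1 p.2 q.2 n)

lemma proj_mix (c : ℕ) (x : ℤ_[ℓ]) (y : ZHatAway ℓ) :
    ZHat.proj (Pp ℓ c) (mixHom ℓ (x, y)) = PadicInt.toZModPow c x := by
  have h := mixC_cast_pow ℓ x y (Pp ℓ c) c dvd_rfl
  exact (ZMod.cast_id _ _).symm.trans h

lemma away_mix (x : ℤ_[ℓ]) (y : ZHatAway ℓ) : ZHat.away ℓ (mixHom ℓ (x, y)) = y := by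
  apply Subtype.ext
  funext m
  have h := mixC_cast_away ℓ x y m.1 m dvd_rfl
  rw [ZMod.castHom_apply, ZMod.cast_id] at h
  exact h

end

section pairGL

variable {R S : Type*} [CommRing R] [CommRing S]

/-- combine two matrices into a matrix over the product ring. -/
def pairMat (A : Matrix (Fin 2) (Fin 2) R) (B : Matrix (Fin 2) (Fin 2) S) :
    Matrix (Fin 2) (Fin 2) (R × S) := Matrix.of fun i j => (A i j, B i j)

lemma pairMat_mul (A A' : Matrix (Fin 2) (Fin 2) R) (B B' : Matrix (Fin 2) (Fin 2) S) :
    pairMat A B * pairMat A' B' = pairMat (A * A') (B * B') := by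
  ext i j <;>
  simp [pairMat, Matrix.mul_apply, Fin.sum_univ_two, Prod.mk_mul_mk, Prod.mk_add_mk]

lemma pairMat_one : pairMat (1 : Matrix (Fin 2) (Fin 2) R) (1 : Matrix (Fin 2) (Fin 2) S) = 1 := by
  ext i j <;> by_cases h : i = j <;> simp [pairMat, Matrix.one_apply, h, Prod.ext_iff]

/-- combine two `GL₂`s into a `GL₂` over the product ring. -/
def pairGL (X : GL (Fin 2) R) (Y : GL (Fin 2) S) : GL (Fin 2) (R × S) where
  val := pairMat X.val Y.val
  inv := pairMat (↑X⁻¹) (↑Y⁻¹)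
  val_inv := by rw [pairMat_mul, Units.mul_inv, Units.mul_inv, pairMat_one]
  inv_val := by rw [pairMat_mul, Units.inv_mul, Units.inv_mul, pairMat_one]

lemma pairGL_entry (X : GL (Fin 2) R) (Y : GL (Fin 2) S) (i j : Fin 2) :
    (pairGL X Y).val i j = (X.val i j, Y.val i j) := rfl

end pairGL

end Stmt3Aux
namespace Stmt3Aux

variable {ℓ : ℕ} [Fact ℓ.Prime]

lemma exists_mem_lift (G : Subgroup (GL (Fin 2) ZHat)) (mG : ℕ+) (hker : (GLred mG).ker ≤ G)
    (γ : ℕ) (hγ : ((mG : ℕ)).factorization ℓ ≤ γ)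
    (k : GL (Fin 2) (ZMod (ℓ ^ (γ + 1))))
    (hk : glMap (ZMod.castHom (pow_dvd_pow ℓ (Nat.le_succ γ)) (ZMod (ℓ ^ γ))) k = 1) :
    ∃ g ∈ G, GLred (Pp ℓ (γ + 1)) g = k ∧ glMap (ZHat.away ℓ) g = 1 := by
  obtain ⟨X, hX⟩ := exists_gl_lift (Nat.le_add_left 1 γ) k
  have hred : ∀ c : ℕ, GLred (Pp ℓ c) (glMap (mixHom ℓ) (pairGL X 1))
      = glMap (PadicInt.toZModPow c) X := by
    intro c
    apply GL_ext
    intro i j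
    rw [glMap_entry, glMap_entry, glMap_entry, pairGL_entry]
    exact proj_mix ℓ c (X.val i j) _
  have haway : glMap (ZHat.away ℓ) (glMap (mixHom ℓ) (pairGL X 1)) = 1 := by
    apply GL_ext
    intro i j
    rw [glMap_entry, glMap_entry, pairGL_entry]
    exact away_mix ℓ (X.val i j) _
  have hredk : GLred (Pp ℓ (γ + 1)) (glMap (mixHom ℓ) (pairGL X 1)) = k :=
    (hred (γ + 1)).trans hX
  set b := ((mG : ℕ)).factorization ℓ with hbdef
  have hmG0 : (mG : ℕ) ≠ 0 := mG.pos.ne'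
  have hda : ℓ ^ b ∣ (mG : ℕ) := Nat.ordProj_dvd _ _
  have hdb : (mG : ℕ) / ℓ ^ b ∣ (mG : ℕ) := Nat.ordCompl_dvd _ _
  have hd : (mG : ℕ) = ℓ ^ b * ((mG : ℕ) / ℓ ^ b) :=
    (Nat.ordProj_mul_ordCompl_eq_self _ _).symm
  have cop : (ℓ ^ b).Coprime ((mG : ℕ) / ℓ ^ b) :=
    (Nat.coprime_ordCompl (Fact.out : ℓ.Prime) hmG0).pow_left _
  have hbγ1 : b ≤ γ + 1 := le_trans hγ (Nat.le_succ γ)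
  have hchain : glMap (PadicInt.toZModPow b) X = 1 := by
    apply GL_ext
    intro i j
    rw [glMap_entry, GL_one_entry]
    have h1 : PadicInt.toZModPow b (X.val i j)
        = ZMod.castHom (pow_dvd_pow ℓ hbγ1) (ZMod (ℓ ^ b))
            (PadicInt.toZModPow (γ + 1) (X.val i j)) := by
      rw [ZMod.castHom_apply, PadicInt.cast_toZModPow _ _ hbγ1]
    have h2 : PadicInt.toZModPow (γ + 1) (X.val i j) = k.val i j :=
      congrArg (fun u : GL (Fin 2) (ZMod (ℓ ^ (γ + 1))) => u.val i j) hX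
    have h3 : ZMod.castHom (pow_dvd_pow ℓ (Nat.le_succ γ)) (ZMod (ℓ ^ γ)) (k.val i j)
        = (1 : Matrix (Fin 2) (Fin 2) (ZMod (ℓ ^ γ))) i j :=
      congrArg (fun u : GL (Fin 2) (ZMod (ℓ ^ γ)) => u.val i j) hk
    have h4 : ZMod.castHom (pow_dvd_pow ℓ hbγ1) (ZMod (ℓ ^ b)) (k.val i j)
        = ZMod.castHom (pow_dvd_pow ℓ hγ) (ZMod (ℓ ^ b))
            (ZMod.castHom (pow_dvd_pow ℓ (Nat.le_succ γ)) (ZMod (ℓ ^ γ)) (k.val i j)) := by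
      rw [← RingHom.comp_apply, ZMod.castHom_comp]
    rw [h1, h2, h4, h3]
    exact matrix_one_entry _ i j
  have hA : glMap (ZMod.castHom hda (ZMod (ℓ ^ b))) (GLred mG (glMap (mixHom ℓ) (pairGL X 1)))
      = 1 :=
    (GLred_compat (d := Pp ℓ b) (n := mG) hda _).trans ((hred b).trans hchain)
  have hB : glMap (ZMod.castHom hdb (ZMod ((mG : ℕ) / ℓ ^ b)))
      (GLred mG (glMap (mixHom ℓ) (pairGL X 1))) = 1 :=
    (GLred_compat (d := ⟨(mG : ℕ) / ℓ ^ b, Nat.ordCompl_pos ℓ hmG0⟩) (n := mG) hdb _).trans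
      (GLred_of_away ⟨(mG : ℕ) / ℓ ^ b, Nat.ordCompl_pos ℓ hmG0⟩
        (Nat.not_dvd_ordCompl (Fact.out : ℓ.Prime) hmG0) haway)
  have hone : GLred mG (glMap (mixHom ℓ) (pairGL X 1)) = 1 :=
    GL_eq_one_of_crt cop hd hda hdb hA hB
  exact ⟨glMap (mixHom ℓ) (pairGL X 1), hker (MonoidHom.mem_ker.mpr hone), hredk, haway⟩

end Stmt3Aux

namespace Stmt3Aux

variable {ℓ : ℕ} [Fact ℓ.Prime]

lemma alpha_one_le : 1 ≤ alphaExp ℓ := by unfold alphaExp; split <;> omega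

lemma choose_pow_dvd {γ i : ℕ} (hγ : alphaExp ℓ ≤ γ) (h2 : 2 ≤ i) (hi : i ≤ ℓ) :
    ℓ ^ (γ + 2) ∣ Nat.choose ℓ i * ℓ ^ (γ * i) := by
  have hp : ℓ.Prime := Fact.out
  have hγ1 : 1 ≤ γ := le_trans alpha_one_le hγ
  rcases eq_or_lt_of_le hi with rfl | hlt
  · rw [Nat.choose_self, one_mul]
    apply pow_dvd_pow
    by_cases h2ℓ : i = 2
    · have halpha : alphaExp i = 2 := by unfold alphaExp; simp [h2ℓ]
      rw [halpha] at hγ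
      rw [h2ℓ]
      omega
    · have h3 : 3 ≤ i := by have := hp.two_le; omega
      have hm : γ * 3 ≤ γ * i := Nat.mul_le_mul le_rfl h3
      exact le_trans (by omega : γ + 2 ≤ γ * 3) hm
  · have hdvd : ℓ ∣ Nat.choose ℓ i := hp.dvd_choose_self (by omega) hlt
    obtain ⟨t, ht⟩ := hdvd
    have hm : γ * 2 ≤ γ * i := Nat.mul_le_mul le_rfl h2
    have h1 : γ + 2 ≤ 1 + γ * i := le_trans (by omega : γ + 2 ≤ 1 + γ * 2)
      (by omega : 1 + γ * 2 ≤ 1 + γ * i)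
    calc ℓ ^ (γ + 2) ∣ ℓ ^ (1 + γ * i) := pow_dvd_pow ℓ h1
      _ = ℓ * ℓ ^ (γ * i) := by rw [pow_add, pow_one]
      _ ∣ ℓ * t * ℓ ^ (γ * i) := mul_dvd_mul (dvd_mul_right ℓ t) dvd_rfl
      _ = Nat.choose ℓ i * ℓ ^ (γ * i) := by rw [← ht]

lemma cast_zero_sub {c c' : ℕ} (h : c' ≤ c) (x : ZMod (ℓ ^ c))
    (hx : ZMod.castHom (pow_dvd_pow ℓ h) (ZMod (ℓ ^ c')) x = 0) :
    ∃ t : ℕ, x = ((ℓ ^ c' * t : ℕ) : ZMod (ℓ ^ c)) := by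
  have hl : 0 < ℓ := Nat.Prime.pos Fact.out
  haveI : NeZero (ℓ ^ c) := NeZero.mk (pow_ne_zero _ hl.ne')
  haveI : NeZero (ℓ ^ c') := NeZero.mk (pow_ne_zero _ hl.ne')
  have hdvd : ℓ ^ c' ∣ x.val := by
    have h0 : ((x.val : ℕ) : ZMod (ℓ ^ c')) = 0 := by
      rw [ZMod.natCast_val, ← ZMod.castHom_apply (h := pow_dvd_pow ℓ h), hx]
    exact (ZMod.natCast_eq_zero_iff _ _).mp h0
  exact ⟨x.val / ℓ ^ c', by rw [Nat.mul_div_cancel' hdvd, ZMod.natCast_zmod_val]⟩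

lemma power_step (γ : ℕ) (hγ : alphaExp ℓ ≤ γ)
    (k : GL (Fin 2) (ZMod (ℓ ^ (γ + 1 + 1))))
    (hk : glMap (ZMod.castHom (pow_dvd_pow ℓ (Nat.le_succ (γ + 1)))
      (ZMod (ℓ ^ (γ + 1)))) k = 1) :
    ∃ j : GL (Fin 2) (ZMod (ℓ ^ (γ + 1))),
      glMap (ZMod.castHom (pow_dvd_pow ℓ (Nat.le_succ γ)) (ZMod (ℓ ^ γ))) j = 1 ∧
      ∀ u : GL (Fin 2) (ZMod (ℓ ^ (γ + 1 + 1))),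
        glMap (ZMod.castHom (pow_dvd_pow ℓ (Nat.le_succ (γ + 1)))
          (ZMod (ℓ ^ (γ + 1)))) u = j → u ^ ℓ = k := by
  have hp : ℓ.Prime := Fact.out
  have hl : 0 < ℓ := hp.pos
  have hγ1 : 1 ≤ γ := le_trans alpha_one_le hγ
  haveI : NeZero (ℓ ^ (γ + 1 + 1)) := NeZero.mk (pow_ne_zero _ hl.ne')
  haveI : NeZero (ℓ ^ (γ + 1)) := NeZero.mk (pow_ne_zero _ hl.ne')
  haveI : NeZero (ℓ ^ γ) := NeZero.mk (pow_ne_zero _ hl.ne')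
  have hkentry : ∀ i j', ∃ t : ℕ,
      k.val i j' - (1 : Matrix (Fin 2) (Fin 2) (ZMod (ℓ ^ (γ + 1 + 1)))) i j'
        = ((ℓ ^ (γ + 1) * t : ℕ) : ZMod (ℓ ^ (γ + 1 + 1))) := by
    intro i j'
    apply cast_zero_sub (Nat.le_succ (γ + 1))
    rw [map_sub, matrix_one_entry]
    have h3 : ZMod.castHom (pow_dvd_pow ℓ (Nat.le_succ (γ + 1))) (ZMod (ℓ ^ (γ + 1)))
        (k.val i j') = (1 : Matrix (Fin 2) (Fin 2) (ZMod (ℓ ^ (γ + 1)))) i j' :=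
      congrArg (fun u : GL (Fin 2) (ZMod (ℓ ^ (γ + 1))) => u.val i j') hk
    rw [h3, sub_self]
  choose B hB using hkentry
  set Jmat : Matrix (Fin 2) (Fin 2) (ZMod (ℓ ^ (γ + 1))) :=
    1 + Matrix.of (fun i j' => ((ℓ ^ γ * B i j' : ℕ) : ZMod (ℓ ^ (γ + 1)))) with hJ
  have hJentry : ∀ i j', Jmat i j'
      = (1 : Matrix (Fin 2) (Fin 2) (ZMod (ℓ ^ (γ + 1)))) i j'
        + ((ℓ ^ γ * B i j' : ℕ) : ZMod (ℓ ^ (γ + 1))) := fun i j' => rfl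
  have hJcast : ∀ i j', ZMod.castHom (pow_dvd_pow ℓ (Nat.le_succ γ)) (ZMod (ℓ ^ γ)) (Jmat i j')
      = (1 : Matrix (Fin 2) (Fin 2) (ZMod (ℓ ^ γ))) i j' := by
    intro i j'
    rw [hJentry, map_add, matrix_one_entry, map_natCast]
    rw [show ((ℓ ^ γ * B i j' : ℕ) : ZMod (ℓ ^ γ)) = 0 from
      (ZMod.natCast_eq_zero_iff _ _).mpr (dvd_mul_right _ _), add_zero]
  have hJunit : IsUnit Jmat := by
    rw [Matrix.isUnit_iff_isUnit_det]
    apply zmod_isUnit_of_cast (Nat.le_add_left 1 γ)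
    have hmap : Jmat.map (ZMod.castHom (dvd_pow_self ℓ (by omega : γ + 1 ≠ 0)) (ZMod ℓ))
        = 1 := by
      ext i j'
      rw [Matrix.map_apply, hJentry, map_add, matrix_one_entry, map_natCast]
      rw [show ((ℓ ^ γ * B i j' : ℕ) : ZMod ℓ) = 0 from
        (ZMod.natCast_eq_zero_iff _ _).mpr
          (dvd_mul_of_dvd_left (dvd_pow_self ℓ (by omega : γ ≠ 0)) _), add_zero]
    rw [RingHom.map_det]
    show IsUnit ((Jmat.map (ZMod.castHom (dvd_pow_self ℓ (by omega : γ + 1 ≠ 0)) (ZMod ℓ))).det)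
    rw [hmap, Matrix.det_one]
    exact isUnit_one
  refine ⟨hJunit.unit, ?_, ?_⟩
  · apply GL_ext
    intro i j'
    rw [glMap_entry, GL_one_entry]
    rw [show (hJunit.unit).val i j' = Jmat i j' from
      congrFun (congrFun hJunit.unit_spec i) j']
    exact hJcast i j'
  · intro u hu
    have hucast : ∀ i j', ZMod.castHom (pow_dvd_pow ℓ (Nat.le_succ (γ + 1)))
        (ZMod (ℓ ^ (γ + 1))) (u.val i j') = Jmat i j' := by
      intro i j'
      have h5 : (glMap (ZMod.castHom (pow_dvd_pow ℓ (Nat.le_succ (γ + 1)))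
          (ZMod (ℓ ^ (γ + 1)))) u).val i j' = (hJunit.unit).val i j' :=
        congrArg (fun v : GL (Fin 2) (ZMod (ℓ ^ (γ + 1))) => v.val i j') hu
      rw [glMap_entry] at h5
      rw [h5]
      exact congrFun (congrFun hJunit.unit_spec i) j'
    have hdiff : ∀ i j', ∃ t : ℕ,
        u.val i j' - ((1 : Matrix (Fin 2) (Fin 2) (ZMod (ℓ ^ (γ + 1 + 1)))) i j'
          + ((ℓ ^ γ * B i j' : ℕ) : ZMod (ℓ ^ (γ + 1 + 1))))
          = ((ℓ ^ (γ + 1) * t : ℕ) : ZMod (ℓ ^ (γ + 1 + 1))) := by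
      intro i j'
      apply cast_zero_sub (Nat.le_succ (γ + 1))
      rw [map_sub, map_add, matrix_one_entry, map_natCast, hucast, hJentry, sub_self]
    choose C hC using hdiff
    set r : ZMod (ℓ ^ (γ + 1 + 1)) := ((ℓ : ℕ) : ZMod (ℓ ^ (γ + 1 + 1))) with hr
    set Bm : Matrix (Fin 2) (Fin 2) (ZMod (ℓ ^ (γ + 1 + 1))) :=
      Matrix.of (fun i j' => ((B i j' : ℕ) : ZMod (ℓ ^ (γ + 1 + 1)))) with hBm
    set Cm : Matrix (Fin 2) (Fin 2) (ZMod (ℓ ^ (γ + 1 + 1))) :=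
      Matrix.of (fun i j' => ((C i j' : ℕ) : ZMod (ℓ ^ (γ + 1 + 1)))) with hCm
    set N : Matrix (Fin 2) (Fin 2) (ZMod (ℓ ^ (γ + 1 + 1))) := Bm + r • Cm with hN
    have hM : u.val = 1 + (r ^ γ) • N := by
      ext i j'
      have h6 := hC i j'
      have h7 : u.val i j' = (1 : Matrix (Fin 2) (Fin 2) (ZMod (ℓ ^ (γ + 1 + 1)))) i j'
          + ((ℓ ^ γ * B i j' : ℕ) : ZMod (ℓ ^ (γ + 1 + 1)))
          + ((ℓ ^ (γ + 1) * C i j' : ℕ) : ZMod (ℓ ^ (γ + 1 + 1))) := by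
        rw [← h6]; ring
      rw [h7, Matrix.add_apply, Matrix.smul_apply, hN, Matrix.add_apply, Matrix.smul_apply,
        hBm, hCm, Matrix.of_apply, Matrix.of_apply, hr]
      simp only [smul_eq_mul]
      push_cast
      ring
    have hbin : u.val ^ ℓ = ∑ m ∈ Finset.range (ℓ + 1),
        Nat.choose ℓ m • (((r ^ γ) • N) ^ m) := by
      rw [hM, add_comm (1 : Matrix (Fin 2) (Fin 2) (ZMod (ℓ ^ (γ + 1 + 1)))) ((r ^ γ) • N)]
      rw [(Commute.one_right ((r ^ γ) • N)).add_pow]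
      apply Finset.sum_congr rfl
      intro m _
      rw [one_pow, mul_one, nsmul_eq_mul]
      exact ((Nat.cast_commute (Nat.choose ℓ m) ((((r ^ γ) • N)) ^ m)).eq).symm
    rw [Finset.sum_range_succ'] at hbin
    have hzero : ∀ m ∈ Finset.range ℓ, m ≠ 0 →
        Nat.choose ℓ (m + 1) • (((r ^ γ) • N) ^ (m + 1)) = 0 := by
      intro m hmem hm0
      have hm1 : m + 1 ≤ ℓ := Finset.mem_range.mp hmem
      rw [smul_pow, ← Nat.cast_smul_eq_nsmul (ZMod (ℓ ^ (γ + 1 + 1))), smul_smul]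
      have hsc : ((Nat.choose ℓ (m + 1) : ℕ) : ZMod (ℓ ^ (γ + 1 + 1))) * (r ^ γ) ^ (m + 1)
          = ((Nat.choose ℓ (m + 1) * ℓ ^ (γ * (m + 1)) : ℕ) : ZMod (ℓ ^ (γ + 1 + 1))) := by
        rw [hr]; push_cast; rw [← pow_mul]
      rw [hsc, show ((Nat.choose ℓ (m + 1) * ℓ ^ (γ * (m + 1)) : ℕ)
          : ZMod (ℓ ^ (γ + 1 + 1))) = 0 from (ZMod.natCast_eq_zero_iff _ _).mpr
          (choose_pow_dvd hγ (by omega) hm1), zero_smul]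
    have hsingle : ∑ m ∈ Finset.range ℓ, Nat.choose ℓ (m + 1) • (((r ^ γ) • N) ^ (m + 1))
        = Nat.choose ℓ (0 + 1) • (((r ^ γ) • N) ^ (0 + 1)) :=
      Finset.sum_eq_single_of_mem 0 (Finset.mem_range.mpr hl) hzero
    rw [hsingle] at hbin
    have hM1 : Nat.choose ℓ (0 + 1) • (((r ^ γ) • N) ^ (0 + 1))
        + Nat.choose ℓ 0 • (((r ^ γ) • N) ^ 0)
        = 1 + (r ^ (γ + 1)) • Bm := by
      rw [Nat.choose_one_right, Nat.choose_zero_right, pow_zero, pow_one, one_smul]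
      rw [← Nat.cast_smul_eq_nsmul (ZMod (ℓ ^ (γ + 1 + 1))), ← hr, smul_smul]
      rw [hN, smul_add, smul_smul]
      have hzero2 : (r * r ^ γ * r) • Cm = 0 := by
        rw [show r * r ^ γ * r = ((ℓ ^ (γ + 1 + 1) : ℕ) : ZMod (ℓ ^ (γ + 1 + 1))) from by
          rw [hr]; push_cast; ring, ZMod.natCast_self, zero_smul]
      rw [hzero2, add_zero, show r * r ^ γ = r ^ (γ + 1) from by ring]
      exact add_comm _ _
    rw [hM1] at hbin
    have hfinal : u.val ^ ℓ = k.val := by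
      rw [hbin]
      ext i j'
      have h8 := hB i j'
      have h9 : k.val i j' = (1 : Matrix (Fin 2) (Fin 2) (ZMod (ℓ ^ (γ + 1 + 1)))) i j'
          + ((ℓ ^ (γ + 1) * B i j' : ℕ) : ZMod (ℓ ^ (γ + 1 + 1))) := by
        rw [← h8]; ring
      rw [h9, Matrix.add_apply, Matrix.smul_apply, hBm, Matrix.of_apply, hr]
      simp only [smul_eq_mul]
      push_cast
      ring
    exact Units.ext (by rw [Units.val_pow_eq_pow_val, hfinal])

end Stmt3Aux

namespace Stmt3Aux

variable {ℓ : ℕ} [Fact ℓ.Prime]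

/-- the slice lifting property at level `γ`. -/
def SliceLift (G : Subgroup (GL (Fin 2) ZHat)) (ℓ : ℕ) [Fact ℓ.Prime] (γ : ℕ) : Prop :=
  ∀ k : GL (Fin 2) (ZMod (ℓ ^ (γ + 1))),
    glMap (ZMod.castHom (pow_dvd_pow ℓ (Nat.le_succ γ)) (ZMod (ℓ ^ γ))) k = 1 →
    ∃ g ∈ G, GLred (Pp ℓ (γ + 1)) g = k ∧ glMap (ZHat.away ℓ) g = 1

lemma slice_all (G : Subgroup (GL (Fin 2) ZHat)) (β : ℕ)
    (hbase : ∀ γ, β ≤ γ → γ ≤ max β (alphaExp ℓ) → SliceLift G ℓ γ) :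
    ∀ γ, β ≤ γ → SliceLift G ℓ γ := by
  intro γ
  induction γ using Nat.strong_induction_on with
  | _ γ ih =>
    intro hβγ
    by_cases hle : γ ≤ max β (alphaExp ℓ)
    · exact hbase γ hβγ hle
    · push_neg at hle
      have hmax1 : alphaExp ℓ ≤ max β (alphaExp ℓ) := le_max_right _ _
      have hmax2 : β ≤ max β (alphaExp ℓ) := le_max_left _ _
      obtain ⟨γ', rfl⟩ : ∃ γ', γ = γ' + 1 := ⟨γ - 1, by omega⟩
      have hα : alphaExp ℓ ≤ γ' := by omega
      have hprev : SliceLift G ℓ γ' := ih γ' (by omega) (by omega)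
      intro k hk
      obtain ⟨j, hj1, hj2⟩ := power_step γ' hα k hk
      obtain ⟨g, hgG, hgred, hgaway⟩ := hprev j hj1
      refine ⟨g ^ ℓ, pow_mem hgG ℓ, ?_, by rw [map_pow, hgaway, one_pow]⟩
      have hcast : glMap (ZMod.castHom (pow_dvd_pow ℓ (Nat.le_succ (γ' + 1)))
          (ZMod (ℓ ^ (γ' + 1)))) (GLred (Pp ℓ (γ' + 1 + 1)) g) = j :=
        (GLred_compat (d := Pp ℓ (γ' + 1)) (n := Pp ℓ (γ' + 1 + 1))
          (pow_dvd_pow ℓ (Nat.le_succ (γ' + 1))) g).trans hgred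
      have hfin := hj2 (GLred (Pp ℓ (γ' + 1 + 1)) g) hcast
      rw [map_pow]
      exact hfin

lemma in_G_of_high (G : Subgroup (GL (Fin 2) ZHat)) (mG : ℕ+)
    (hker : (GLred mG).ker ≤ G) {c : ℕ} (hbc : ((mG : ℕ)).factorization ℓ ≤ c)
    (g : GL (Fin 2) ZHat) (h1 : GLred (Pp ℓ c) g = 1)
    (h2 : GLred ⟨(mG : ℕ) / ℓ ^ ((mG : ℕ)).factorization ℓ, Nat.ordCompl_pos ℓ mG.pos.ne'⟩ g
      = 1) : g ∈ G := by
  have hmG0 : (mG : ℕ) ≠ 0 := mG.pos.ne'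
  have hda : ℓ ^ ((mG : ℕ)).factorization ℓ ∣ (mG : ℕ) := Nat.ordProj_dvd _ _
  have hdb : (mG : ℕ) / ℓ ^ ((mG : ℕ)).factorization ℓ ∣ (mG : ℕ) := Nat.ordCompl_dvd _ _
  have hd : (mG : ℕ) = ℓ ^ ((mG : ℕ)).factorization ℓ
      * ((mG : ℕ) / ℓ ^ ((mG : ℕ)).factorization ℓ) :=
    (Nat.ordProj_mul_ordCompl_eq_self _ _).symm
  have cop : (ℓ ^ ((mG : ℕ)).factorization ℓ).Coprime
      ((mG : ℕ) / ℓ ^ ((mG : ℕ)).factorization ℓ) :=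
    (Nat.coprime_ordCompl (Fact.out : ℓ.Prime) hmG0).pow_left _
  have h1' : GLred (Pp ℓ (((mG : ℕ)).factorization ℓ)) g = 1 := by
    rw [← GLred_pow_compat ℓ hbc g, h1]
    exact map_one _
  apply hker
  refine MonoidHom.mem_ker.mpr ?_
  exact GL_eq_one_of_crt cop hd hda hdb
    ((GLred_compat (d := Pp ℓ (((mG : ℕ)).factorization ℓ)) (n := mG) hda g).trans h1')
    ((GLred_compat (d := ⟨(mG : ℕ) / ℓ ^ ((mG : ℕ)).factorization ℓ,
        Nat.ordCompl_pos ℓ mG.pos.ne'⟩) (n := mG) hdb g).trans h2)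

lemma down_lemma (G : Subgroup (GL (Fin 2) ZHat)) (mG : ℕ+)
    (hker : (GLred mG).ker ≤ G) (β : ℕ) (hsl : ∀ γ, β ≤ γ → SliceLift G ℓ γ) :
    ∀ t c, β ≤ c → ((mG : ℕ)).factorization ℓ ≤ c + t →
      ∀ g : GL (Fin 2) ZHat, GLred (Pp ℓ c) g = 1 →
        GLred ⟨(mG : ℕ) / ℓ ^ ((mG : ℕ)).factorization ℓ, Nat.ordCompl_pos ℓ mG.pos.ne'⟩ g
          = 1 → g ∈ G := by
  intro t
  induction t with
  | zero =>
    intro c hc hbc g h1 h2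
    exact in_G_of_high G mG hker (by omega) g h1 h2
  | succ t ih =>
    intro c hc hbc g h1 h2
    by_cases hbc' : ((mG : ℕ)).factorization ℓ ≤ c
    · exact in_G_of_high G mG hker hbc' g h1 h2
    · have hk : glMap (ZMod.castHom (pow_dvd_pow ℓ (Nat.le_succ c)) (ZMod (ℓ ^ c)))
          (GLred (Pp ℓ (c + 1)) g) = 1 :=
        (GLred_pow_compat ℓ (Nat.le_succ c) g).trans h1
      obtain ⟨h, hhG, hhred, hhaway⟩ := hsl c hc (GLred (Pp ℓ (c + 1)) g) hk
      have hg'1 : GLred (Pp ℓ (c + 1)) (h⁻¹ * g) = 1 := by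
        rw [MonoidHom.map_mul, MonoidHom.map_inv, hhred, inv_mul_cancel]
      have hg'2 : GLred ⟨(mG : ℕ) / ℓ ^ ((mG : ℕ)).factorization ℓ,
          Nat.ordCompl_pos ℓ mG.pos.ne'⟩ (h⁻¹ * g) = 1 := by
        rw [MonoidHom.map_mul, MonoidHom.map_inv, h2, mul_one, inv_eq_one]
        exact GLred_of_away ⟨(mG : ℕ) / ℓ ^ ((mG : ℕ)).factorization ℓ,
          Nat.ordCompl_pos ℓ mG.pos.ne'⟩ (Nat.not_dvd_ordCompl (Fact.out : ℓ.Prime) mG.pos.ne') hhaway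
      have hmem := ih (c + 1) (by omega) (by omega) (h⁻¹ * g) hg'1 hg'2
      have := mul_mem hhG hmem
      rwa [mul_inv_cancel_left] at this

end Stmt3Aux
/-- Let `G ⊆ GL₂(Ẑ)` be an open subgroup with conductor `m_G = ∏_ℓ ℓ^{β_ℓ}`.  For
each prime `ℓ`, the exponent `β_ℓ` of `ℓ` in `m_G` is the least `β ≥ 0` such that,
for every `γ` with `β ≤ γ ≤ max {β, α_ℓ}`,
`ker(GL₂(ℤ/ℓ^{γ+1}ℤ) → GL₂(ℤ/ℓ^γℤ)) × {1} ⊆ (π_{ℓ^∞,ℓ^{γ+1}} × id)(G)` under the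
identification `GL₂(Ẑ) ≅ GL₂(ℤ_ℓ) × GL₂(ℤ_(ℓ))`. -/
theorem statement3 (G : Subgroup (GL (Fin 2) ZHat)) (mG : ℕ+)
    (hker : (GLred mG).ker ≤ G)
    (hmin : ∀ k : ℕ+, (GLred k).ker ≤ G → mG ≤ k) :
    ∀ (ℓ : ℕ) [Fact ℓ.Prime],
      IsLeast
        {β : ℕ | ∀ γ : ℕ, β ≤ γ → γ ≤ max β (alphaExp ℓ) →
          ∀ k ∈ (glMap (ZMod.castHom (pow_dvd_pow ℓ (Nat.le_succ γ)) (ZMod (ℓ ^ γ)))).ker,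
            ∃ g ∈ G,
              glMap ((PadicInt.toZModPow (p := ℓ) (γ + 1)).comp (ZHat.toPadicInt ℓ)) g = k ∧
              glMap (ZHat.away ℓ) g = 1}
        ((mG : ℕ).factorization ℓ) := by

  intro ℓ instF
  constructor
  · -- membership of the ℓ-adic valuation of the conductor
    intro γ hγ _hmax k hk
    rw [MonoidHom.mem_ker] at hk
    obtain ⟨g, hgG, hgred, hgaway⟩ := Stmt3Aux.exists_mem_lift G mG hker γ hγ k hk
    refine ⟨g, hgG, ?_, hgaway⟩
    exact (congrArg (fun f => glMap f g) (Stmt3Aux.proj_comp_toPadicInt ℓ (γ + 1))).trans hgred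
  · -- lower bound
    intro β hβ
    have hp : ℓ.Prime := Fact.out
    have hbase : ∀ γ, β ≤ γ → γ ≤ max β (alphaExp ℓ) → Stmt3Aux.SliceLift G ℓ γ := by
      intro γ h1 h2 k hk
      obtain ⟨g, hgG, hgproj, hgaway⟩ := hβ γ h1 h2 k (MonoidHom.mem_ker.mpr hk)
      refine ⟨g, hgG, ?_, hgaway⟩
      exact (congrArg (fun f => glMap f g) (Stmt3Aux.proj_comp_toPadicInt ℓ (γ + 1))).symm.trans
        hgproj
    have hsl := Stmt3Aux.slice_all G β hbase
    have hm'pos : 0 < (mG : ℕ) / ℓ ^ ((mG : ℕ)).factorization ℓ :=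
      Nat.ordCompl_pos ℓ mG.pos.ne'
    have hKpos : 0 < ℓ ^ β * ((mG : ℕ) / ℓ ^ ((mG : ℕ)).factorization ℓ) :=
      Nat.mul_pos (pow_pos hp.pos β) hm'pos
    have hKker : (GLred ⟨ℓ ^ β * ((mG : ℕ) / ℓ ^ ((mG : ℕ)).factorization ℓ), hKpos⟩).ker
        ≤ G := by
      intro g hg
      rw [MonoidHom.mem_ker] at hg
      have h1 : GLred (Stmt3Aux.Pp ℓ β) g = 1 := by
        rw [← Stmt3Aux.GLred_compat (d := Stmt3Aux.Pp ℓ β)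
          (n := ⟨ℓ ^ β * ((mG : ℕ) / ℓ ^ ((mG : ℕ)).factorization ℓ), hKpos⟩)
          (dvd_mul_right _ _) g, hg, MonoidHom.map_one]
      have h2 : GLred ⟨(mG : ℕ) / ℓ ^ ((mG : ℕ)).factorization ℓ,
          Nat.ordCompl_pos ℓ mG.pos.ne'⟩ g = 1 := by
        rw [← Stmt3Aux.GLred_compat
          (d := ⟨(mG : ℕ) / ℓ ^ ((mG : ℕ)).factorization ℓ, Nat.ordCompl_pos ℓ mG.pos.ne'⟩)
          (n := ⟨ℓ ^ β * ((mG : ℕ) / ℓ ^ ((mG : ℕ)).factorization ℓ), hKpos⟩)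
          (dvd_mul_left _ _) g, hg, MonoidHom.map_one]
      exact Stmt3Aux.down_lemma G mG hker β hsl (((mG : ℕ)).factorization ℓ) β le_rfl
        (Nat.le_add_left _ _) g h1 h2
    have hle := hmin _ hKker
    have hleN : (mG : ℕ) ≤ ℓ ^ β * ((mG : ℕ) / ℓ ^ ((mG : ℕ)).factorization ℓ) := hle
    have heq : (mG : ℕ) = ℓ ^ ((mG : ℕ)).factorization ℓ
        * ((mG : ℕ) / ℓ ^ ((mG : ℕ)).factorization ℓ) :=
      (Nat.ordProj_mul_ordCompl_eq_self _ _).symm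
    have hleN2 : ℓ ^ ((mG : ℕ)).factorization ℓ
        * ((mG : ℕ) / ℓ ^ ((mG : ℕ)).factorization ℓ)
        ≤ ℓ ^ β * ((mG : ℕ) / ℓ ^ ((mG : ℕ)).factorization ℓ) :=
      le_trans (le_of_eq heq.symm) hleN
    have hpow : ℓ ^ ((mG : ℕ)).factorization ℓ ≤ ℓ ^ β :=
      Nat.le_of_mul_le_mul_right hleN2 hm'pos
    exact (Nat.pow_le_pow_iff_right hp.one_lt).mp hpow
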